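/- Let L = 5 and define f(φ) = 2sin(φ/L) − sin((2π−φ)/L). Then there exists a unique φ₀ in the open interval (0, 2π) with f(φ₀) = 0, and 1.95 < φ₀ < 1.96. -/

import Mathlib

open Real

set_option maxHeartbeats 1000000

private lemma sinb {x : ℝ} (h0 : 0 ≤ x) (h1 : x ≤ 1) :
    x - x ^ 3 / 6 - x ^ 4 * (5 / 96) ≤ Real.sin x ∧
      Real.sin x ≤ x - x ^ 3 / 6 + x ^ 4 * (5 / 96) := by
  have h : |x| ≤ 1 := by rwa [abs_of_nonneg h0]
  have hb := Real.sin_bound h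
  rw [abs_of_nonneg h0] at hb
  obtain ⟨hl, hr⟩ := abs_le.mp hb
  have h5 : x ^ 5 ≤ x ^ 4 := pow_le_pow_of_le_one h0 h1 (by norm_num)
  have h4 : 0 ≤ x ^ 4 := by positivity
  constructor <;> linarith

private lemma cosb {x : ℝ} (h0 : 0 ≤ x) (h1 : x ≤ 1) :
    1 - x ^ 2 / 2 - x ^ 4 * (5 / 96) ≤ Real.cos x ∧
      Real.cos x ≤ 1 - x ^ 2 / 2 + x ^ 4 * (5 / 96) := by
  have h : |x| ≤ 1 := by rwa [abs_of_nonneg h0]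
  have hb := Real.cos_bound h
  rw [abs_of_nonneg h0] at hb
  obtain ⟨hl, hr⟩ := abs_le.mp hb
  constructor <;> linarith

private lemma cos2 (x : ℝ) : Real.cos (2 * x) = 1 - 2 * Real.sin x ^ 2 := by
  have := Real.sin_sq_add_cos_sq x
  rw [Real.cos_two_mul]; linarith

/-- sin bounds on an interval -/
private lemma sin_int_lb {x lo hi c : ℝ} (h0 : 0 ≤ lo) (hlo : lo ≤ x) (hhi : x ≤ hi)
    (h1 : hi ≤ 1) (hc : c ≤ lo - hi ^ 3 / 6 - hi ^ 4 * (5 / 96)) : c ≤ Real.sin x := by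
  have h0x : (0:ℝ) ≤ x := le_trans h0 hlo
  have := (sinb h0x (le_trans hhi h1)).1
  have h3 : x ^ 3 ≤ hi ^ 3 := pow_le_pow_left₀ h0x hhi 3
  have h4 : x ^ 4 ≤ hi ^ 4 := pow_le_pow_left₀ h0x hhi 4
  linarith

private lemma sin_int_ub {x lo hi c : ℝ} (h0 : 0 ≤ lo) (hlo : lo ≤ x) (hhi : x ≤ hi)
    (h1 : hi ≤ 1) (hc : hi - lo ^ 3 / 6 + hi ^ 4 * (5 / 96) ≤ c) : Real.sin x ≤ c := by
  have h0x : (0:ℝ) ≤ x := le_trans h0 hlo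
  have := (sinb h0x (le_trans hhi h1)).2
  have h3 : lo ^ 3 ≤ x ^ 3 := pow_le_pow_left₀ h0 hlo 3
  have h4 : x ^ 4 ≤ hi ^ 4 := pow_le_pow_left₀ h0x hhi 4
  linarith

private lemma cos_int_lb {x lo hi c : ℝ} (h0 : 0 ≤ lo) (hlo : lo ≤ x) (hhi : x ≤ hi)
    (h1 : hi ≤ 1) (hc : c ≤ 1 - hi ^ 2 / 2 - hi ^ 4 * (5 / 96)) : c ≤ Real.cos x := by
  have h0x : (0:ℝ) ≤ x := le_trans h0 hlo
  have := (cosb h0x (le_trans hhi h1)).1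
  have h2 : x ^ 2 ≤ hi ^ 2 := pow_le_pow_left₀ h0x hhi 2
  have h4 : x ^ 4 ≤ hi ^ 4 := pow_le_pow_left₀ h0x hhi 4
  linarith

private lemma cos_int_ub {x lo hi c : ℝ} (h0 : 0 ≤ lo) (hlo : lo ≤ x) (hhi : x ≤ hi)
    (h1 : hi ≤ 1) (hc : 1 - lo ^ 2 / 2 + hi ^ 4 * (5 / 96) ≤ c) : Real.cos x ≤ c := by
  have h0x : (0:ℝ) ≤ x := le_trans h0 hlo
  have := (cosb h0x (le_trans hhi h1)).2
  have h2 : lo ^ 2 ≤ x ^ 2 := pow_le_pow_left₀ h0 hlo 2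
  have h4 : x ^ 4 ≤ hi ^ 4 := pow_le_pow_left₀ h0x hhi 4
  linarith

theorem stmt_6 (L : ℝ) (hL : L = 5)
    (f : ℝ → ℝ) (hf : ∀ φ, f φ = 2 * Real.sin (φ / L) - Real.sin ((2 * π - φ) / L)) :
    ∃ φ₀ ∈ Set.Ioo (0 : ℝ) (2 * π), f φ₀ = 0 ∧
      (∀ ψ ∈ Set.Ioo (0 : ℝ) (2 * π), f ψ = 0 → ψ = φ₀) ∧
      1.95 < φ₀ ∧ φ₀ < 1.96 := by
  subst hL
  have hpil : (3.141592 : ℝ) < π := Real.pi_gt_d6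
  have hpiu : π < 3.141593 := Real.pi_lt_d6
  have hfe : f = fun φ => 2 * Real.sin (φ / 5) - Real.sin ((2 * π - φ) / 5) := funext hf
  -- continuity
  have hfc : Continuous f := by
    rw [hfe]; fun_prop
  -- derivative
  have hd : ∀ x : ℝ, HasDerivAt f
      (2 / 5 * Real.cos (x / 5) + 1 / 5 * Real.cos ((2 * π - x) / 5)) x := by
    intro x
    have h1 : HasDerivAt (fun φ : ℝ => φ / 5) (1 / 5) x := by
      simpa using (hasDerivAt_id x).div_const 5
    have h2 : HasDerivAt (fun φ : ℝ => (2 * π - φ) / 5) (-1 / 5) x := by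
      have h : HasDerivAt (fun φ : ℝ => 2 * π - φ) (-1) x := by
        simpa using (hasDerivAt_id' x).const_sub (2 * π)
      exact h.div_const 5
    have h3 := ((h1.sin).const_mul 2).sub (h2.sin)
    rw [hfe]
    convert h3 using 1
    · rfl
    · rfl
    · rfl
    · ring
  -- strict monotonicity on [0, 2π]
  have hmono : StrictMonoOn f (Set.Icc 0 (2 * π)) := by
    apply strictMonoOn_of_deriv_pos (convex_Icc _ _) hfc.continuousOn
    intro x hx
    rw [interior_Icc] at hx
    obtain ⟨hx0, hx2⟩ := hx
    rw [(hd x).deriv]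
    have hc1 : 0 < Real.cos (x / 5) := by
      apply Real.cos_pos_of_mem_Ioo
      constructor <;> [linarith; linarith]
    have hc2 : 0 < Real.cos ((2 * π - x) / 5) := by
      apply Real.cos_pos_of_mem_Ioo
      constructor <;> [linarith; linarith]
    positivity
  -- numeric bounds at 0.195 and 0.196
  have hs1u : Real.sin 0.195 ≤ 0.1938395 :=
    sin_int_ub (by norm_num) le_rfl le_rfl (by norm_num) (by norm_num)
  have hs1l : (0:ℝ) ≤ Real.sin 0.195 :=
    sin_int_lb (by norm_num) le_rfl le_rfl (by norm_num) (by norm_num)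
  have hc1u : Real.cos 0.195 ≤ 0.981063 :=
    cos_int_ub (by norm_num) le_rfl le_rfl (by norm_num) (by norm_num)
  have hc1l : (0:ℝ) ≤ Real.cos 0.195 :=
    cos_int_lb (by norm_num) le_rfl le_rfl (by norm_num) (by norm_num)
  have hs2l : (0.194668:ℝ) ≤ Real.sin 0.196 :=
    sin_int_lb (by norm_num) le_rfl le_rfl (by norm_num) (by norm_num)
  have hc2l : (0.980715:ℝ) ≤ Real.cos 0.196 :=
    cos_int_lb (by norm_num) le_rfl le_rfl (by norm_num) (by norm_num)
  -- f 1.95 < 0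
  have hA : f 1.95 < 0 := by
    rw [hf]
    have e1 : (1.95 : ℝ) / 5 = 2 * 0.195 := by norm_num
    set u : ℝ := (2 * π - 1.95) / 5 with hu
    set w : ℝ := u / 4 with hw
    have hwlo : (0.2166592 : ℝ) ≤ w := by rw [hw, hu]; nlinarith
    have hwhi : w ≤ (0.2166593 : ℝ) := by rw [hw, hu]; nlinarith
    have hswl : (0.2148493 : ℝ) ≤ Real.sin w :=
      sin_int_lb (by norm_num) hwlo hwhi (by norm_num) (by norm_num)
    have hswu : Real.sin w ≤ (0.2150791 : ℝ) :=
      sin_int_ub (by norm_num) hwlo hwhi (by norm_num) (by norm_num)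
    have hcwl : (0.9764146 : ℝ) ≤ Real.cos w :=
      cos_int_lb (by norm_num) hwlo hwhi (by norm_num) (by norm_num)
    have eu : u = 2 * (2 * w) := by rw [hw]; ring
    have hsinu : Real.sin u =
        2 * (2 * Real.sin w * Real.cos w) * (1 - 2 * Real.sin w ^ 2) := by
      rw [eu, Real.sin_two_mul, Real.sin_two_mul, cos2]
    rw [e1, Real.sin_two_mul, hsinu]
    -- products
    have hp1 : Real.sin 0.195 * Real.cos 0.195 ≤ 0.1938395 * 0.981063 :=
      mul_le_mul hs1u hc1u hc1l (by norm_num)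
    have hp2 : (0.2148493 : ℝ) * 0.9764146 ≤ Real.sin w * Real.cos w :=
      mul_le_mul hswl hcwl (by norm_num) (by linarith)
    have hq : (0.9074819 : ℝ) ≤ 1 - 2 * Real.sin w ^ 2 := by nlinarith
    have hp3 : (0.2148493 : ℝ) * 0.9764146 * 0.9074819 ≤
        (Real.sin w * Real.cos w) * (1 - 2 * Real.sin w ^ 2) :=
      mul_le_mul hp2 hq (by norm_num) (by nlinarith)
    nlinarith [hp1, hp3]
  -- f 1.96 > 0
  have hB : 0 < f 1.96 := by
    rw [hf]
    have e1 : (1.96 : ℝ) / 5 = 2 * 0.196 := by norm_num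
    set u : ℝ := (2 * π - 1.96) / 5 with hu
    set w : ℝ := u / 4 with hw
    have hwlo : (0.2161592 : ℝ) ≤ w := by rw [hw, hu]; nlinarith
    have hwhi : w ≤ (0.2161593 : ℝ) := by rw [hw, hu]; nlinarith
    have hswl : (0.2143621 : ℝ) ≤ Real.sin w :=
      sin_int_lb (by norm_num) hwlo hwhi (by norm_num) (by norm_num)
    have hswu : Real.sin w ≤ (0.2145897 : ℝ) :=
      sin_int_ub (by norm_num) hwlo hwhi (by norm_num) (by norm_num)
    have hcwu : Real.cos w ≤ (0.9767514 : ℝ) :=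
      cos_int_ub (by norm_num) hwlo hwhi (by norm_num) (by norm_num)
    have hcwl : (0 : ℝ) ≤ Real.cos w :=
      cos_int_lb (by norm_num) hwlo hwhi (by norm_num) (by norm_num)
    have eu : u = 2 * (2 * w) := by rw [hw]; ring
    have hsinu : Real.sin u =
        2 * (2 * Real.sin w * Real.cos w) * (1 - 2 * Real.sin w ^ 2) := by
      rw [eu, Real.sin_two_mul, Real.sin_two_mul, cos2]
    rw [e1, Real.sin_two_mul, hsinu]
    have hp1 : (0.194668 : ℝ) * 0.980715 ≤ Real.sin 0.196 * Real.cos 0.196 :=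
      mul_le_mul hs2l hc2l (by norm_num) (by linarith)
    have hp2 : Real.sin w * Real.cos w ≤ (0.2145897 : ℝ) * 0.9767514 :=
      mul_le_mul hswu hcwu hcwl (by norm_num)
    have hq : 1 - 2 * Real.sin w ^ 2 ≤ (0.9080978 : ℝ) := by nlinarith
    have hp3 : (Real.sin w * Real.cos w) * (1 - 2 * Real.sin w ^ 2) ≤
        (0.2145897 : ℝ) * 0.9767514 * 0.9080978 :=
      mul_le_mul hp2 hq (by nlinarith) (by norm_num)
    nlinarith [hp1, hp3]
  -- existence via IVT
  have hsub : Set.Ioo (f 1.95) (f 1.96) ⊆ f '' Set.Ioo 1.95 1.96 :=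
    intermediate_value_Ioo (by norm_num) hfc.continuousOn
  obtain ⟨φ₀, hφ₀mem, hφ₀⟩ := hsub ⟨hA, hB⟩
  obtain ⟨hφ₀l, hφ₀r⟩ := hφ₀mem
  have hmem : φ₀ ∈ Set.Ioo (0 : ℝ) (2 * π) := ⟨by linarith, by linarith⟩
  refine ⟨φ₀, hmem, hφ₀, ?_, hφ₀l, hφ₀r⟩
  intro ψ hψ hψ0
  have hψI : ψ ∈ Set.Icc (0 : ℝ) (2 * π) := ⟨le_of_lt hψ.1, le_of_lt hψ.2⟩
  have hφI : φ₀ ∈ Set.Icc (0 : ℝ) (2 * π) := ⟨le_of_lt hmem.1, le_of_lt hmem.2⟩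
  rcases lt_trichotomy ψ φ₀ with h | h | h
  · exfalso; have := hmono hψI hφI h; rw [hψ0, hφ₀] at this; exact lt_irrefl 0 this
  · exact h
  · exfalso; have := hmono hφI hψI h; rw [hψ0, hφ₀] at this; exact lt_irrefl 0 this
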